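/- Let n > 2, k = 2^r + 1 with r ≥ 1, s_i = k·2^{n+i} + 1, and let P_k(n) be the Proth numerical semigroup. Every element s of the Apéry set Ap(P_k(n), s_0) can be written as s = a_1·s_1 + ⋯ + a_{n+r}·s_{n+r} for some tuple (a_1,…,a_{n+r}) with each a_i ∈ {0,1,2} and such that a_j = 2 implies a_i = 0 for all i < j. -/

import Mathlib

def pcAux : ℕ → ℕ := fun n =>
  if h : n = 0 then 0 else n % 2 + pcAux (n / 2)
decreasing_by exact Nat.div_lt_self (Nat.pos_of_ne_zero h) one_lt_two

lemma pcAux_rec (n : ℕ) : pcAux n = n % 2 + pcAux (n / 2) := by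
  rcases eq_or_ne n 0 with rfl | h
  · rw [pcAux]; simp
  · rw [pcAux]; simp [h]

lemma pcAux_zero : pcAux 0 = 0 := by rw [pcAux]; simp

lemma pcAux_one : pcAux 1 = 1 := by rw [pcAux_rec]; simp [pcAux_zero]

lemma pcAux_two_mul (n : ℕ) : pcAux (2*n) = pcAux n := by
  rw [pcAux_rec]
  have h1 : 2*n % 2 = 0 := by omega
  have h2 : 2*n / 2 = n := by omega
  rw [h1, h2]; simp

lemma pcAux_two_mul_add_one (n : ℕ) : pcAux (2*n+1) = pcAux n + 1 := by
  rw [pcAux_rec]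
  have h1 : (2*n+1) % 2 = 1 := by omega
  have h2 : (2*n+1) / 2 = n := by omega
  rw [h1, h2, add_comm]

lemma pcAux_le (n : ℕ) : pcAux n ≤ n := by
  induction n using Nat.strong_induction_on with
  | _ n ih =>
    rcases eq_or_ne n 0 with rfl | h
    · simp [pcAux_zero]
    · rw [pcAux_rec]
      have := ih (n/2) (Nat.div_lt_self (Nat.pos_of_ne_zero h) one_lt_two)
      omega

lemma pcAux_pos (n : ℕ) (h : 0 < n) : 0 < pcAux n := by
  induction n using Nat.strong_induction_on with
  | _ n ih =>
    rw [pcAux_rec]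
    rcases Nat.eq_zero_or_pos (n % 2) with h1 | h1
    · have h2 : 0 < n / 2 := by omega
      have := ih (n/2) (Nat.div_lt_self h one_lt_two) h2
      omega
    · omega

lemma pcAux_lt_pow : ∀ t n : ℕ, n < 2^t → pcAux n ≤ t := by
  intro t
  induction t with
  | zero => intro n h; interval_cases n; simp [pcAux_zero]
  | succ t ih =>
    intro n h
    rcases eq_or_ne n 0 with rfl | h0
    · simp [pcAux_zero]
    · rw [pcAux_rec]
      have h2 : n / 2 < 2^t := by
        have : (2:ℕ)^(t+1) = 2*2^t := by ring
        omega
      have := ih (n/2) h2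
      omega

lemma pcAux_add_le_aux : ∀ N a b : ℕ, a + b ≤ N → pcAux (a+b) ≤ pcAux a + pcAux b := by
  intro N
  induction N with
  | zero => intro a b h; have : a = 0 ∧ b = 0 := by omega
            rcases this with ⟨rfl, rfl⟩; simp
  | succ N ih =>
    intro a b h
    rcases Nat.eq_zero_or_pos (a+b) with h0 | h0
    · have : a = 0 ∧ b = 0 := by omega
      rcases this with ⟨rfl, rfl⟩; simp
    rw [pcAux_rec (a+b), pcAux_rec a, pcAux_rec b]
    rcases Nat.eq_zero_or_pos ((a % 2) + (b % 2) - 1) with hc | hc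
    · -- not both odd
      have h1 : (a+b) % 2 = a % 2 + b % 2 := by omega
      have h3 := ih (a/2) (b/2) (by omega)
      rw [(by omega : (a+b) / 2 = a/2 + b/2), h1]
      omega
    · -- both odd
      have ha : a % 2 = 1 := by omega
      have hb : b % 2 = 1 := by omega
      have h1 : (a+b) % 2 = 0 := by omega
      have h2 : (a+b) / 2 = a/2 + (b/2 + 1) := by omega
      have h3 := ih (a/2) (b/2+1) (by omega)

      have h4 := ih (b/2) 1 (by omega)
      rw [pcAux_one] at h4
      rw [h1, h2]
      omega

lemma pcAux_add_le (a b : ℕ) : pcAux (a+b) ≤ pcAux a + pcAux b :=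
  pcAux_add_le_aux (a+b) a b le_rfl

lemma pcAux_two_pow_mul (t x : ℕ) : pcAux (2^t * x) = pcAux x := by
  induction t with
  | zero => simp
  | succ t ih =>
    have : (2:ℕ)^(t+1) * x = 2 * (2^t * x) := by ring
    rw [this, pcAux_two_mul, ih]

lemma pcAux_pow (t : ℕ) : pcAux (2^t) = 1 := by
  have := pcAux_two_pow_mul t 1
  simpa [pcAux_one] using this

lemma pcAux_odd (u : ℕ) (h : u % 2 = 1) : pcAux u = pcAux (u - 1) + 1 := by
  have h1 : u = 2*(u/2)+1 := by omega
  have h2 : u - 1 = 2*(u/2) := by omega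
  rw [h2, pcAux_two_mul]
  conv_lhs => rw [h1]
  rw [pcAux_two_mul_add_one]

lemma pcAux_pow_mul_sub_one (t u : ℕ) (hu : 0 < u) : pcAux (2^t * u - 1) = t + pcAux (u - 1) := by
  induction t with
  | zero => simp
  | succ t ih =>
    have h1 : 0 < 2^t * u := by positivity
    have h2 : (2:ℕ)^(t+1) * u - 1 = 2*(2^t * u - 1) + 1 := by
      have : (2:ℕ)^(t+1) * u = 2*(2^t*u) := by ring
      omega
    rw [h2, pcAux_two_mul_add_one, ih]
    omega

lemma geomSumPow (a b : ℕ) (h : a ≤ b) : (∑ i ∈ Finset.Ico a b, 2^i) + 2^a = 2^b := by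
  induction b, h using Nat.le_induction with
  | base => simp
  | succ b hb ih =>
    rw [Finset.sum_Ico_succ_top hb]
    have := ih
    omega

lemma bitsum : ∀ N X : ℕ, X < 2^N →
    (∑ i ∈ Finset.range N, (X / 2^i % 2) * 2^i = X) ∧
    (∑ i ∈ Finset.range N, (X / 2^i % 2) = pcAux X) := by
  intro N
  induction N with
  | zero =>
    intro X h
    interval_cases X
    simp [pcAux_zero]
  | succ N ih =>
    intro X h
    have hX2 : X / 2 < 2^N := by
      have : (2:ℕ)^(N+1) = 2*2^N := by ring
      omega
    obtain ⟨ih1, ih2⟩ := ih (X/2) hX2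
    have hdiv : ∀ i : ℕ, X / 2^(i+1) = (X/2) / 2^i := by
      intro i
      rw [Nat.div_div_eq_div_mul]
      congr 1
      ring
    constructor
    · rw [Finset.sum_range_succ']
      have : ∀ i ∈ Finset.range N, (X / 2^(i+1) % 2) * 2^(i+1) = 2*(((X/2) / 2^i % 2) * 2^i) := by
        intro i _
        rw [hdiv i]
        ring
      rw [Finset.sum_congr rfl this, ← Finset.mul_sum, ih1]
      simp
      omega
    · rw [Finset.sum_range_succ']
      have : ∀ i ∈ Finset.range N, (X / 2^(i+1) % 2) = ((X/2) / 2^i % 2) := by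
        intro i _
        rw [hdiv i]
      rw [Finset.sum_congr rfl this, ih2, pcAux_rec X]
      simp
      omega

lemma lowbit (B j i : ℕ) (h : 2^(j+1) ∣ B) (hij : i ≤ j) : B / 2^i % 2 = 0 := by
  obtain ⟨w, rfl⟩ := h
  have h1 : (2:ℕ)^(j+1) = 2^i * (2 * 2^(j-i)) := by
    rw [← pow_succ']
    rw [← pow_add]
    congr 1
    omega
  rw [h1, mul_assoc, Nat.mul_div_cancel_left _ (by positivity : 0 < (2:ℕ)^i), mul_assoc]
  exact Nat.mul_mod_right 2 _


lemma mem_clos (n r : ℕ) : ∀ M m : ℕ, pcAux M ≤ m → m ≤ M →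
    (2^r+1)*2^n*M + m ∈ AddSubmonoid.closure {x : ℕ | ∃ i : ℕ, x = (2^r+1)*2^(n+i)+1} := by
  intro M
  induction M using Nat.strong_induction_on with
  | _ M ih =>
    intro m h1 h2
    rcases eq_or_ne M 0 with rfl | hM0
    · have hm : m = 0 := by omega
      subst hm
      simpa using AddSubmonoid.zero_mem _
    · obtain ⟨v, u, hu, rfl⟩ := Nat.exists_eq_two_pow_mul_odd hM0
      have hu1 : u % 2 = 1 := Nat.odd_iff.mp hu
      have hup : 0 < u := by omega
      have hpM : pcAux (2^v*u) = pcAux u := pcAux_two_pow_mul v u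
      have hpu : pcAux u ≤ m := by rw [hpM] at h1; exact h1
      have hpu1 : 0 < pcAux u := pcAux_pos u hup
      have hm1 : 1 ≤ m := le_trans hpu1 hpu
      set c := pcAux u + v - m with hc
      have hcv : c ≤ v := by omega
      have h2c : (2:ℕ)^c ≤ 2^v := Nat.pow_le_pow_right (by norm_num) hcv
      have h2cM : (2:ℕ)^c ≤ 2^v * u := le_trans h2c (Nat.le_mul_of_pos_right _ hup)
      have hpow : (2:ℕ)^v = 2^c * 2^(v-c) := by rw [← pow_add]; congr 1; omega
      have hM1eq : 2^v*u - 2^c = 2^c * (2^(v-c)*u - 1) := by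
        rw [Nat.mul_sub, ← mul_assoc, ← hpow, mul_one]
      have hpcM1 : pcAux (2^v*u - 2^c) = (v-c) + pcAux (u-1) := by
        rw [hM1eq, pcAux_two_pow_mul, pcAux_pow_mul_sub_one _ _ hup]
      have hpuodd : pcAux u = pcAux (u-1) + 1 := pcAux_odd u hu1
      have key1 : (v - c) + pcAux (u - 1) ≤ m - 1 := by omega
      -- key2 : m - 1 + 2^c ≤ 2^v * u
      have key2 : m - 1 + 2^c ≤ 2^v * u := by
        rcases Nat.eq_zero_or_pos c with hc0 | hc0
        · rw [hc0]; omega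
        · set d := m - pcAux u with hd
          have hdc : c = v - d := by omega
          have hdv : d + 1 ≤ v := by omega
          have hBd : d + 1 ≤ 2^d := Nat.lt_two_pow_self (n := d)
          have hmul : (2:ℕ)^(v-d) * 2^d = 2^v := by rw [← pow_add]; congr 1; omega
          have hstep : 2^(v-d) + d ≤ 2^v := by
            have h5 : (2:ℕ)^(v-d) * (d+1) ≤ 2^(v-d) * 2^d := Nat.mul_le_mul_left _ hBd
            have h6 : 1 ≤ (2:ℕ)^(v-d) := Nat.one_le_two_pow
            nlinarith
          have hC : pcAux (u-1) ≤ u - 1 := pcAux_le (u-1)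
          have hD : (u-1) + 1 ≤ u := by omega
          have hE : (u-1) * 2^v + 2^v = u * 2^v := by
            have : ((u-1) + 1) * 2^v = u * 2^v := by congr 1; omega
            rw [← this]; ring
          have hF : (u-1) ≤ (u-1) * 2^v := Nat.le_mul_of_pos_right _ (by positivity)
          have hcd : (2:ℕ)^c = 2^(v-d) := by rw [hdc]
          have hgoal : m - 1 + 2^c = pcAux (u-1) + d + 2^(v-d) := by omega
          rw [hgoal, mul_comm]
          omega
      have hlt : 2^v*u - 2^c < 2^v*u := by
        have : 0 < (2:ℕ)^c := by positivity
        omega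
      have hmem := ih (2^v*u - 2^c) hlt (m-1) (by rw [hpcM1]; exact key1) (by omega)
      have hgen : (2^r+1)*2^(n+c)+1 ∈ AddSubmonoid.closure {x : ℕ | ∃ i : ℕ, x = (2^r+1)*2^(n+i)+1} :=
        AddSubmonoid.subset_closure ⟨c, rfl⟩
      have hadd := AddSubmonoid.add_mem _ hgen hmem
      have heq : (2^r+1)*2^n*(2^v*u) + m = ((2^r+1)*2^(n+c)+1) + ((2^r+1)*2^n*(2^v*u - 2^c) + (m-1)) := by
        have e1 : (2^r+1)*2^(n+c) = (2^r+1)*2^n*2^c := by rw [pow_add]; ring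
        have e2 : (2^r+1)*2^n*(2^v*u - 2^c) + (2^r+1)*2^n*2^c = (2^r+1)*2^n*(2^v*u) := by
          rw [← mul_add]; congr 1; omega
        omega
      rw [heq]
      exact hadd

lemma exists_decomp (n r s : ℕ)
    (hs : s ∈ AddSubmonoid.closure {x : ℕ | ∃ i : ℕ, x = (2^r+1)*2^(n+i)+1}) :
    ∃ M m : ℕ, s = (2^r+1)*2^n*M + m ∧ pcAux M ≤ m ∧ m ≤ M := by
  induction hs using AddSubmonoid.closure_induction with
  | mem x hx =>
    obtain ⟨i, rfl⟩ := hx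
    exact ⟨2^i, 1, by rw [pow_add]; ring, by rw [pcAux_pow], Nat.one_le_two_pow⟩
  | zero => exact ⟨0, 0, by simp, by rw [pcAux_zero], le_refl 0⟩
  | add x y hx hy ihx ihy =>
    obtain ⟨M1, m1, e1, p1, q1⟩ := ihx
    obtain ⟨M2, m2, e2, p2, q2⟩ := ihy
    refine ⟨M1+M2, m1+m2, by rw [e1, e2]; ring, ?_, by omega⟩
    calc pcAux (M1+M2) ≤ pcAux M1 + pcAux M2 := pcAux_add_le _ _
    _ ≤ m1 + m2 := by omega


lemma pow_lin1 (t : ℕ) (h : 2 ≤ t) : t + 2 ≤ 2^t := by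
  induction t, h using Nat.le_induction with
  | base => norm_num
  | succ t ht ih =>
    have : (2:ℕ)^(t+1) = 2*2^t := by ring
    omega

lemma pow_lin2 (t : ℕ) (h : 3 ≤ t) : 2*t + 2 ≤ 2^t := by
  induction t, h using Nat.le_induction with
  | base => norm_num
  | succ t ht ih =>
    have : (2:ℕ)^(t+1) = 2*2^t := by ring
    omega

theorem apery_representation (n r : ℕ) (hn : 2 < n) (hr : 1 ≤ r) (hrn : r + 1 ≤ n)
    (s : ℕ) (hs : s ∈ AddSubmonoid.closure
        {m : ℕ | ∃ i : ℕ, m = (2 ^ r + 1) * 2 ^ (n + i) + 1})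
    (hap : ∀ t ∈ AddSubmonoid.closure
        {m : ℕ | ∃ i : ℕ, m = (2 ^ r + 1) * 2 ^ (n + i) + 1},
        s ≠ t + ((2 ^ r + 1) * 2 ^ n + 1)) :
    ∃ a : ℕ → ℕ, (∀ i, a i ≤ 2) ∧
      (∀ j, a j = 2 → ∀ i, i < j → a i = 0) ∧
      s = ∑ i ∈ Finset.Icc 1 (n + r), a i * ((2 ^ r + 1) * 2 ^ (n + i) + 1) := by
  classical
  rcases eq_or_ne s 0 with rfl | hs0
  · exact ⟨fun _ => 0, fun i => by norm_num, fun j h => by simp at h, by simp⟩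
  obtain ⟨M1, m1, hM1⟩ := exists_decomp n r s hs
  have hex : ∃ M : ℕ, ∃ m : ℕ, s = (2^r+1)*2^n*M + m ∧ pcAux M ≤ m ∧ m ≤ M := ⟨M1, m1, hM1⟩
  set M0 := Nat.find hex with hM0def
  obtain ⟨m, hsm, hpm, hmM⟩ : ∃ m, s = (2^r+1)*2^n*M0 + m ∧ pcAux M0 ≤ m ∧ m ≤ M0 :=
    Nat.find_spec hex
  have hmin : ∀ M', M' < M0 →
      ¬ ∃ m', s = (2^r+1)*2^n*M' + m' ∧ pcAux M' ≤ m' ∧ m' ≤ M' :=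
    fun M' h => Nat.find_min hex h
  have hM0pos : 0 < M0 := by
    rcases Nat.eq_zero_or_pos M0 with h0 | h
    · exfalso; apply hs0; rw [h0] at hmM hsm; omega
    · exact h
  have hM0ne : M0 ≠ 0 := hM0pos.ne'
  have hm1 : 1 ≤ m := le_trans (pcAux_pos M0 hM0pos) hpm
  -- Apery condition consequence
  have hdag : m ≤ pcAux (M0 - 1) := by
    by_contra hcon
    push_neg at hcon
    have ht := mem_clos n r (M0-1) (m-1) (by omega) (by omega)
    apply hap _ ht
    have e : (2^r+1)*2^n*(M0-1) + (2^r+1)*2^n = (2^r+1)*2^n*M0 := by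
      have h9 : (2^r+1)*2^n*((M0-1)+1) = (2^r+1)*2^n*M0 := by congr 1; omega
      rw [← h9]; ring
    omega
  -- bound M0
  have hbound : M0 < 2^(n+r+1) := by
    by_contra hb
    push_neg at hb
    set L := Nat.log 2 M0 with hL
    have hL1 : 2^L ≤ M0 := Nat.pow_log_le_self 2 hM0ne
    have hL2 : M0 < 2^(L+1) := Nat.lt_pow_succ_log_self (by norm_num) M0
    have hLge : n+r+1 ≤ L := by
      have h3 : (2:ℕ)^(n+r+1) < 2^(L+1) := lt_of_le_of_lt hb hL2
      have h4 := (Nat.pow_lt_pow_iff_right (by norm_num : 1 < 2)).mp h3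
      omega
    obtain ⟨a, hLa⟩ : ∃ a, L = n+r+1+a := ⟨L - (n+r+1), by omega⟩
    have hmle : m ≤ L + 1 := by
      have h4 : M0 - 1 < 2^(L+1) := by omega
      exact le_trans hdag (pcAux_lt_pow (L+1) _ h4)
    have hKE : (2^r+1)*2^n * 2^a = 2^(n+r+a) + 2^(n+a) := by
      rw [pow_add, pow_add, pow_add]; ring
    have f1 : a + 1 ≤ 2^a := Nat.lt_two_pow_self (n := a)
    have f2 : 2*n+2 ≤ 2^n := pow_lin2 n (by omega)
    have f3 : 2 ≤ 2^r := by
      calc (2:ℕ) = 2^1 := rfl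
      _ ≤ 2^r := Nat.pow_le_pow_right (by norm_num) hr
    have e1 : (2:ℕ)^(n+a) = 2^n * 2^a := pow_add 2 n a
    have e2 : (2:ℕ)^(n+r+a) = 2^n * (2^r * 2^a) := by rw [pow_add, pow_add]; ring
    have e3 : (2:ℕ)^(n+r+1+a) = 2 * (2^n * (2^r * 2^a)) := by
      have h5 : n+r+1+a = (n+r+a)+1 := by omega
      rw [h5, pow_succ, e2]; ring
    have hM0ge : 2^(n+r+1+a) ≤ M0 := by rw [← hLa]; exact hL1
    have hmle2 : m ≤ n+r+a+2 := by omega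
    have g5 : (2*n+1)*(a+1) ≤ (2*n+1)*2^a := Nat.mul_le_mul_left _ f1
    have g6 : (2*n+2)*2^a ≤ 2^n*2^a := Nat.mul_le_mul_right _ f2
    have g7a : a ≤ (2*n+1)*a := Nat.le_mul_of_pos_left a (by omega)
    have g7 : n + r + a + 2 ≤ (2*n+1)*(a+1) := by
      have e : (2*n+1)*(a+1) = (2*n+1)*a + 2*n+1 := by ring
      linarith
    have g9 : (2*n+2)*2^a = (2*n+1)*2^a + 2^a := by ring
    have g8 : 2*(2^n*2^a) ≤ 2^n*(2^r*2^a) := by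
      calc 2*(2^n*2^a) = (2^n*2^a)*2 := by ring
      _ ≤ (2^n*2^a)*2^r := Nat.mul_le_mul_left _ f3
      _ = 2^n*(2^r*2^a) := by ring
    have hnum : (n+r+a+2) + (2^(n+r+a) + 2^(n+a)) + 2^a ≤ 2^(n+r+1+a) := by
      rw [e1, e2, e3]
      linarith
    have hEle : (2:ℕ)^a ≤ M0 :=
      le_trans (Nat.pow_le_pow_right (by norm_num) (by omega : a ≤ L)) hL1
    refine hmin (M0 - 2^a)
      (Nat.sub_lt hM0pos (by positivity))
      ⟨m + (2^(n+r+a) + 2^(n+a)), ?_, ?_, ?_⟩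
    · have e : (2^r+1)*2^n*(M0 - 2^a) + (2^r+1)*2^n*2^a = (2^r+1)*2^n*M0 := by
        rw [← mul_add]; congr 1; omega
      omega
    · have hp : pcAux (M0 - 2^a) ≤ L + 1 := pcAux_lt_pow (L+1) _ (by omega)
      have h6 : n+r+a+2 ≤ 2^(n+r+a) := pow_lin1 (n+r+a) (by omega)
      omega
    · omega
  -- extract structure
  obtain ⟨v, u, hu, hMvu⟩ := Nat.exists_eq_two_pow_mul_odd hM0ne
  have hu1 : u % 2 = 1 := Nat.odd_iff.mp hu
  have hup : 0 < u := by omega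
  have hpM : pcAux M0 = pcAux u := by rw [hMvu]; exact pcAux_two_pow_mul v u
  have hpudag : pcAux (M0 - 1) = v + pcAux (u-1) := by
    rw [hMvu]; exact pcAux_pow_mul_sub_one v u hup
  have hpuodd : pcAux u = pcAux (u-1) + 1 := pcAux_odd u hu1
  have hpum : pcAux u ≤ m := by rw [hpM] at hpm; exact hpm
  have hpupos : 0 < pcAux u := pcAux_pos u hup
  have hv1 : 1 ≤ v := by omega
  set d := m - pcAux u with hd
  have hdv : d + 1 ≤ v := by omega
  have h2v : (2:ℕ)^v ≤ M0 := by rw [hMvu]; exact Nat.le_mul_of_pos_right _ hup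
  have hvnr : v ≤ n + r := by
    have h3 : (2:ℕ)^v < 2^(n+r+1) := lt_of_le_of_lt h2v hbound
    have h4 := (Nat.pow_lt_pow_iff_right (by norm_num : 1 < 2)).mp h3
    omega
  set B := M0 - 2^v with hB
  have hBeq : B = 2^(v+1) * ((u-1)/2) := by
    have h7 : (2:ℕ)^(v+1)*((u-1)/2) = 2^v*(2*((u-1)/2)) := by ring
    have h8 : 2*((u-1)/2) = u - 1 := by omega
    rw [hB, hMvu, h7, h8, Nat.mul_sub, mul_one]
  have hBpc : pcAux B = pcAux (u-1) := by
    rw [hBeq, pcAux_two_pow_mul]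
    conv_rhs => rw [(by omega : u - 1 = 2*((u-1)/2))]
    rw [pcAux_two_mul]
  have hBdvd : (2:ℕ)^(v+1) ∣ B := ⟨_, hBeq⟩
  have hBM : B + 2^v = M0 := by omega
  have hBlt : B < 2^((n+r)+1) := by omega
  have hvd1 : 1 ≤ v - d := by omega
  have hbit : ∀ i, i ≤ v → B / 2^i % 2 = 0 := fun i h => lowbit B v i hBdvd h
  have hbitle : ∀ i, B / 2^i % 2 ≤ 1 := fun i => by omega
  set F : ℕ → ℕ := fun i => B / 2^i % 2 +
      ((if v-d ≤ i ∧ i ≤ v-1 then 1 else 0) + (if i = v-d then 1 else 0)) with hF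
  refine ⟨F, ?_, ?_, ?_⟩
  · intro i
    simp only [hF]
    by_cases hiv : i ≤ v
    · rw [hbit i hiv]
      split_ifs <;> omega
    · rw [if_neg (by omega), if_neg (by omega)]
      have := hbitle i
      omega
  · intro j hj i hij
    simp only [hF] at hj ⊢
    by_cases hjv : j ≤ v
    · rw [hbit j hjv] at hj
      by_cases h1 : v-d ≤ j ∧ j ≤ v-1
      · by_cases h2 : j = v-d
        · rw [hbit i (by omega), if_neg (by omega), if_neg (by omega)]
        · rw [if_pos h1, if_neg h2] at hj; omega
      · rw [if_neg h1] at hj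
        split_ifs at hj <;> omega
    · have h1 : ¬(v-d ≤ j ∧ j ≤ v-1) := by omega
      have h2 : j ≠ v-d := by omega
      rw [if_neg h1, if_neg h2] at hj
      have := hbitle j
      omega
  · -- sum
    have e0 : ∀ i, (2^r+1)*2^(n+i)+1 = (2^r+1)*2^n*2^i + 1 := fun i => by
      rw [pow_add]; ring
    clear_value F
    obtain ⟨hb1, hb2⟩ := bitsum ((n+r)+1) B hBlt
    have hrange : Finset.range ((n+r)+1) = insert 0 (Finset.Icc 1 (n+r)) := by
      ext x
      simp only [Finset.mem_range, Finset.mem_insert, Finset.mem_Icc]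
      omega
    have h00 : (0:ℕ) ∉ Finset.Icc 1 (n+r) := by simp
    rw [hrange, Finset.sum_insert h00] at hb1 hb2
    have hbit0 : B / 2^0 % 2 = 0 := hbit 0 (by omega)
    rw [hbit0] at hb1 hb2
    norm_num at hb1 hb2
    -- hb1 : ∑ i in Icc 1 (n+r), B/2^i%2 * 2^i = B ; hb2 : ∑ = pcAux B
    have hsub : Finset.Icc (v-d) (v-1) ⊆ Finset.Icc 1 (n+r) :=
      Finset.Icc_subset_Icc (by omega) (by omega)
    have hIccIco : Finset.Icc (v-d) (v-1) = Finset.Ico (v-d) v := by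
      rw [← Finset.Ico_add_one_right_eq_Icc]; congr 1; omega
    have hP2 : (∑ i ∈ Finset.Icc 1 (n+r), (if v-d ≤ i ∧ i ≤ v-1 then 1 else 0) * 2^i)
        + 2^(v-d) = 2^v := by
      have hi1 : ∀ i ∈ Finset.Icc 1 (n+r), (if v-d ≤ i ∧ i ≤ v-1 then 1 else 0) * 2^i
          = (if i ∈ Finset.Icc (v-d) (v-1) then 2^i else 0) := by
        intro i _
        simp only [Finset.mem_Icc, ite_mul, one_mul, zero_mul]
      rw [Finset.sum_congr rfl hi1, Finset.sum_ite_mem,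
          Finset.inter_eq_right.mpr hsub, hIccIco]
      exact geomSumPow (v-d) v (by omega)
    have hP2' : ∑ i ∈ Finset.Icc 1 (n+r), (if v-d ≤ i ∧ i ≤ v-1 then (1:ℕ) else 0) = d := by
      have hi1' : ∀ i ∈ Finset.Icc 1 (n+r), (if v-d ≤ i ∧ i ≤ v-1 then (1:ℕ) else 0)
          = (if i ∈ Finset.Icc (v-d) (v-1) then 1 else 0) := by
        intro i _
        simp only [Finset.mem_Icc]
      rw [Finset.sum_congr rfl hi1', Finset.sum_ite_mem, Finset.inter_eq_right.mpr hsub,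
          Finset.sum_const, smul_eq_mul, mul_one, Nat.card_Icc]
      omega
    have hvdN : v - d ∈ Finset.Icc 1 (n+r) := by rw [Finset.mem_Icc]; omega
    have hP3 : ∑ i ∈ Finset.Icc 1 (n+r), (if i = v-d then 1 else 0) * 2^i = 2^(v-d) := by
      have hi2 : ∀ i ∈ Finset.Icc 1 (n+r), (if i = v-d then 1 else 0) * 2^i
          = (if i = v-d then 2^i else 0) := by
        intro i _
        split_ifs <;> simp
      rw [Finset.sum_congr rfl hi2, Finset.sum_ite_eq' _ (v-d) (fun i => 2^i), if_pos hvdN]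
    have hP3' : ∑ i ∈ Finset.Icc 1 (n+r), (if i = v-d then (1:ℕ) else 0) = 1 := by
      rw [Finset.sum_ite_eq' _ (v-d) (fun _ => (1:ℕ)), if_pos hvdN]
    have hSpow : ∑ i ∈ Finset.Icc 1 (n+r), F i * 2^i = M0 := by
      have hsplit : ∀ i ∈ Finset.Icc 1 (n+r), F i * 2^i
          = (B / 2^i % 2) * 2^i + ((if v-d ≤ i ∧ i ≤ v-1 then 1 else 0) * 2^i
            + (if i = v-d then 1 else 0) * 2^i) := by
        intro i _
        simp only [hF]
        ring
      rw [Finset.sum_congr rfl hsplit, Finset.sum_add_distrib, Finset.sum_add_distrib,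
          hb1, hP3]
      omega
    have hScnt : ∑ i ∈ Finset.Icc 1 (n+r), F i = m := by
      simp only [hF]
      rw [Finset.sum_add_distrib, Finset.sum_add_distrib, hb2, hP2', hP3', hBpc]
      omega
    calc s = (2^r+1)*2^n*M0 + m := hsm
    _ = (2^r+1)*2^n * (∑ i ∈ Finset.Icc 1 (n+r), F i * 2^i)
        + ∑ i ∈ Finset.Icc 1 (n+r), F i := by rw [hSpow, hScnt]
    _ = ∑ i ∈ Finset.Icc 1 (n+r), ((2^r+1)*2^n * (F i * 2^i) + F i) := by
        rw [Finset.sum_add_distrib, Finset.mul_sum]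
    _ = ∑ i ∈ Finset.Icc 1 (n+r), F i * ((2^r+1)*2^(n+i)+1) := by
        refine Finset.sum_congr rfl fun i _ => ?_
        rw [e0 i]
        ring
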